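/- Let H = (H₁, H₂) : Ω̄ → ℝ² be Lipschitz continuous with 0 < h̲ ≤ H₂ ≤ h̄ and |H₁| ≤ h̄ on a bounded open set Ω ⊂ ℝ². Fix h in the projection of Ω onto the x₂-axis and let X(·, w) denote the maximal solution of X' = H(X), X(0) = (w, h). For k in π_{x₂}(Ω), let t_k(w) be the unique time (when it exists) at which the orbit of X(·, w) meets the line {x₂ = k}. Then the function S(k, w) = t_k(w) is Lipschitz on its domain: there is a constant C > 0 with |S(k,w) − S(k₀,w₀)| ≤ C(|k − k₀| + |w − w₀|) for all (k,w), (k₀,w₀) in the domain of S. -/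

import Mathlib

open Set Real


/-- Lipschitz continuity of the hitting-time function `S(k,w) = t_k(w)` for the flow
of `X' = H(X)`, `X(0) = (w,h)`, where `H` is Lipschitz with `0 < hm ≤ H₂ ≤ hM`, `|H₁| ≤ hM`
on the bounded open set `Ω ⊂ ℝ²`. -/
theorem stmt_4 (Ω : Set (ℝ × ℝ)) (hΩo : IsOpen Ω) (hΩb : Bornology.IsBounded Ω)
    (H : ℝ × ℝ → ℝ × ℝ) (K : NNReal) (hHlip : LipschitzOnWith K H (closure Ω))
    (hm hM : ℝ) (hm_pos : 0 < hm)
    (hH1 : ∀ x ∈ Ω, |(H x).1| ≤ hM)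
    (hH2 : ∀ x ∈ Ω, hm ≤ (H x).2 ∧ (H x).2 ≤ hM)
    (h : ℝ) (αm αp : ℝ → ℝ) (X : ℝ → ℝ → ℝ × ℝ)
    (W : Set ℝ) (hW : W = {w : ℝ | (w, h) ∈ Ω})
    (hdom : ∀ w ∈ W, αm w < 0 ∧ 0 < αp w)
    (hinit : ∀ w ∈ W, X 0 w = (w, h))
    (hODE : ∀ w ∈ W, ∀ t ∈ Set.Ioo (αm w) (αp w),
      X t w ∈ Ω ∧ HasDerivAt (fun s => X s w) (H (X t w)) t)
    (domS : Set (ℝ × ℝ)) (S : ℝ → ℝ → ℝ)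
    (hS : ∀ k w, (k, w) ∈ domS →
      w ∈ W ∧ S k w ∈ Set.Ioo (αm w) (αp w) ∧ (X (S k w) w).2 = k) :
    ∃ C > 0, ∀ k w k₀ w₀, (k, w) ∈ domS → (k₀, w₀) ∈ domS →
      |S k w - S k₀ w₀| ≤ C * (|k - k₀| + |w - w₀|) := by
  classical
  -- diameter bound
  obtain ⟨D, hD⟩ := Metric.isBounded_iff.mp hΩb
  set D' : ℝ := max D 0 with hD'def
  have hD'0 : 0 ≤ D' := le_max_right _ _
  set T : ℝ := D' / hm with hTdef
  have hT0 : 0 ≤ T := div_nonneg hD'0 hm_pos.le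
  set E : ℝ := Real.exp (K * T) with hEdef
  have hE1 : 1 ≤ E := by
    rw [hEdef]
    have : (0:ℝ) ≤ (K:ℝ) * T := mul_nonneg K.coe_nonneg hT0
    calc (1:ℝ) = Real.exp 0 := (Real.exp_zero).symm
      _ ≤ Real.exp ((K:ℝ) * T) := Real.exp_le_exp.mpr this
  refine ⟨(1 + E) / hm, div_pos (by linarith) hm_pos, ?_⟩
  -- derivative of second component
  have hsnd : ∀ w ∈ W, ∀ r ∈ Ioo (αm w) (αp w),
      HasDerivAt (fun τ => (X τ w).2) ((H (X r w)).2) r := by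
    intro w hw r hr
    have := (ContinuousLinearMap.snd ℝ ℝ ℝ).hasFDerivAt.comp_hasDerivAt r (hODE w hw r hr).2
    simpa [Function.comp_def] using this
  -- monotonicity with rate hm
  have mono : ∀ w ∈ W, ∀ s ∈ Ioo (αm w) (αp w), ∀ u ∈ Ioo (αm w) (αp w), s ≤ u →
      hm * (u - s) ≤ (X u w).2 - (X s w).2 := by
    intro w hw s hs u hu hsu
    have hconv : Convex ℝ (Ioo (αm w) (αp w)) := convex_Ioo _ _
    have hcont : ContinuousOn (fun τ => (X τ w).2) (Ioo (αm w) (αp w)) :=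
      fun r hr => (hsnd w hw r hr).continuousAt.continuousWithinAt
    have hdiff : DifferentiableOn ℝ (fun τ => (X τ w).2) (interior (Ioo (αm w) (αp w))) := by
      rw [interior_Ioo]
      exact fun r hr => (hsnd w hw r hr).differentiableAt.differentiableWithinAt
    have hge : ∀ x ∈ interior (Ioo (αm w) (αp w)), hm ≤ deriv (fun τ => (X τ w).2) x := by
      rw [interior_Ioo]
      intro x hx
      rw [(hsnd w hw x hx).deriv]
      exact (hH2 _ (hODE w hw x hx).1).1
    exact hconv.mul_sub_le_image_sub_of_le_deriv hcont hdiff hge s hs u hu hsu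
  -- initial point in Ω
  have hWmem : ∀ w ∈ W, (w, h) ∈ Ω := by intro w hw; rwa [hW] at hw
  -- time bound
  have tbound : ∀ k w, (k, w) ∈ domS → |S k w| ≤ T := by
    intro k w hkw
    obtain ⟨hw, htI, htk⟩ := hS k w hkw
    have h0 : (0:ℝ) ∈ Ioo (αm w) (αp w) := ⟨(hdom w hw).1, (hdom w hw).2⟩
    have hX0 : X 0 w = (w, h) := hinit w hw
    have hXt : X (S k w) w ∈ Ω := (hODE w hw _ htI).1
    have hdist : dist (X (S k w) w) (X 0 w) ≤ D' := by
      refine le_trans (hD hXt (by rw [hX0]; exact hWmem w hw)) (le_max_left _ _)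
    have habs : |(X (S k w) w).2 - (X 0 w).2| ≤ D' := by
      calc |(X (S k w) w).2 - (X 0 w).2| = dist (X (S k w) w).2 (X 0 w).2 := by
            rw [Real.dist_eq]
        _ ≤ dist (X (S k w) w) (X 0 w) := by rw [Prod.dist_eq]; exact le_max_right _ _
        _ ≤ D' := hdist
    have hTm : T * hm = D' := div_mul_cancel₀ _ (ne_of_gt hm_pos)
    rcases le_total 0 (S k w) with hsgn | hsgn
    · have := mono w hw 0 h0 (S k w) htI hsgn
      rw [abs_of_nonneg hsgn]
      have h1 : hm * (S k w) ≤ D' := by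
        have h2 : (X (S k w) w).2 - (X 0 w).2 ≤ D' := (abs_le.mp habs).2
        linarith
      nlinarith
    · have := mono w hw (S k w) htI 0 h0 hsgn
      rw [abs_of_nonpos hsgn]
      have h1 : hm * (-(S k w)) ≤ D' := by
        have h2 : (X 0 w).2 - (X (S k w) w).2 ≤ D' := by
          have := (abs_le.mp habs).1; linarith
        linarith
      nlinarith
  -- forward Gronwall
  have gronF : ∀ w ∈ W, ∀ w₀ ∈ W, ∀ t, 0 ≤ t →
      (∀ s ∈ Icc 0 t, s ∈ Ioo (αm w) (αp w)) →
      (∀ s ∈ Icc 0 t, s ∈ Ioo (αm w₀) (αp w₀)) →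
      dist (X t w) (X t w₀) ≤ |w - w₀| * Real.exp (K * t) := by
    intro w hw w₀ hw₀ t ht hIw hIw₀
    have ha : dist (X 0 w) (X 0 w₀) ≤ |w - w₀| := by
      rw [hinit w hw, hinit w₀ hw₀, Prod.dist_eq]
      simp [Real.dist_eq]
    have key := dist_le_of_trajectories_ODE_of_mem
      (v := fun _ x => H x) (s := fun _ => closure Ω) (K := K)
      (fun _ _ => hHlip)
      (f := fun s => X s w) (g := fun s => X s w₀) (a := 0) (b := t)
      (fun s hs => ((hODE w hw s (hIw s hs)).2).continuousAt.continuousWithinAt)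
      (fun s hs => ((hODE w hw s (hIw s (Ico_subset_Icc_self hs))).2).hasDerivWithinAt)
      (fun s hs => subset_closure (hODE w hw s (hIw s (Ico_subset_Icc_self hs))).1)
      (fun s hs => ((hODE w₀ hw₀ s (hIw₀ s hs)).2).continuousAt.continuousWithinAt)
      (fun s hs => ((hODE w₀ hw₀ s (hIw₀ s (Ico_subset_Icc_self hs))).2).hasDerivWithinAt)
      (fun s hs => subset_closure (hODE w₀ hw₀ s (hIw₀ s (Ico_subset_Icc_self hs))).1)
      ha t ⟨ht, le_refl t⟩
    simpa using key
  -- backward Gronwall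
  have hlipneg : LipschitzOnWith K (fun x => -H x) (closure Ω) := by
    intro x hx y hy
    simpa [edist_neg_neg] using hHlip hx hy
  have gronB : ∀ w ∈ W, ∀ w₀ ∈ W, ∀ t, t ≤ 0 →
      (∀ s ∈ Icc t 0, s ∈ Ioo (αm w) (αp w)) →
      (∀ s ∈ Icc t 0, s ∈ Ioo (αm w₀) (αp w₀)) →
      dist (X t w) (X t w₀) ≤ |w - w₀| * Real.exp (K * (-t)) := by
    intro w hw w₀ hw₀ t ht hIw hIw₀
    have hmem : ∀ s ∈ Icc (0:ℝ) (-t), -s ∈ Icc t 0 := by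
      intro s hs; exact ⟨by linarith [hs.2], by linarith [hs.1]⟩
    have hder : ∀ w' , w' ∈ W → (∀ s ∈ Icc t 0, s ∈ Ioo (αm w') (αp w')) →
        ∀ s ∈ Icc (0:ℝ) (-t), HasDerivAt (fun r => X (-r) w') (-(H (X (-s) w'))) s := by
      intro w' hw' hIw' s hs
      have hd := (hODE w' hw' (-s) (hIw' _ (hmem s hs))).2
      have := hd.scomp s (hasDerivAt_neg s)
      simpa [Function.comp_def] using this
    have ha : dist (X (-(0:ℝ)) w) (X (-(0:ℝ)) w₀) ≤ |w - w₀| := by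
      rw [neg_zero, hinit w hw, hinit w₀ hw₀, Prod.dist_eq]
      simp [Real.dist_eq]
    have key := dist_le_of_trajectories_ODE_of_mem
      (v := fun _ x => -H x) (s := fun _ => closure Ω) (K := K)
      (fun _ _ => hlipneg)
      (f := fun s => X (-s) w) (g := fun s => X (-s) w₀) (a := 0) (b := -t)
      (fun s hs => (hder w hw hIw s hs).continuousAt.continuousWithinAt)
      (fun s hs => (hder w hw hIw s (Ico_subset_Icc_self hs)).hasDerivWithinAt)
      (fun s hs => subset_closure (hODE w hw (-s) (hIw _ (hmem s (Ico_subset_Icc_self hs)))).1)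
      (fun s hs => (hder w₀ hw₀ hIw₀ s hs).continuousAt.continuousWithinAt)
      (fun s hs => (hder w₀ hw₀ hIw₀ s (Ico_subset_Icc_self hs)).hasDerivWithinAt)
      (fun s hs => subset_closure (hODE w₀ hw₀ (-s) (hIw₀ _ (hmem s (Ico_subset_Icc_self hs)))).1)
      ha (-t) ⟨by linarith, le_refl _⟩
    simpa using key
  -- main one-sided estimate
  have key : ∀ k w k₀ w₀, (k, w) ∈ domS → (k₀, w₀) ∈ domS → S k₀ w₀ ≤ S k w →
      S k w - S k₀ w₀ ≤ (1 + E) / hm * (|k - k₀| + |w - w₀|) := by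
    intro k w k₀ w₀ hkw hk₀ hle
    obtain ⟨hw, htI, htk⟩ := hS k w hkw
    obtain ⟨hw₀, ht₀I, ht₀k⟩ := hS k₀ w₀ hk₀
    set t := S k w
    set t₀ := S k₀ w₀
    have hTb : |t| ≤ T := tbound k w hkw
    have hTb₀ : |t₀| ≤ T := tbound k₀ w₀ hk₀
    have hA : (0:ℝ) ≤ |k - k₀| := abs_nonneg _
    have hB : (0:ℝ) ≤ |w - w₀| := abs_nonneg _
    have hCm : ((1 + E) / hm) * hm = 1 + E := div_mul_cancel₀ _ (ne_of_gt hm_pos)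
    rcases le_or_gt 0 t₀ with h1 | h1
    · -- 0 ≤ t₀ ≤ t
      have ht₀Iw : t₀ ∈ Ioo (αm w) (αp w) :=
        ⟨lt_of_lt_of_le (hdom w hw).1 h1, lt_of_le_of_lt hle htI.2⟩
      have hg : dist (X t₀ w) (X t₀ w₀) ≤ |w - w₀| * E := by
        have := gronF w hw w₀ hw₀ t₀ h1
          (fun s hs => ⟨lt_of_lt_of_le (hdom w hw).1 hs.1, lt_of_le_of_lt (hs.2.trans hle) htI.2⟩)
          (fun s hs => ⟨lt_of_lt_of_le (hdom w₀ hw₀).1 hs.1, lt_of_le_of_lt hs.2 ht₀I.2⟩)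
        refine this.trans ?_
        refine mul_le_mul_of_nonneg_left ?_ hB
        rw [hEdef]
        exact Real.exp_le_exp.mpr (mul_le_mul_of_nonneg_left ((le_abs_self t₀).trans hTb₀) K.coe_nonneg)
      have hmono := mono w hw t₀ ht₀Iw t htI hle
      have hcomp : (X t₀ w₀).2 - (X t₀ w).2 ≤ |w - w₀| * E := by
        calc (X t₀ w₀).2 - (X t₀ w).2 ≤ |(X t₀ w).2 - (X t₀ w₀).2| := by
              rw [abs_sub_comm]; exact le_abs_self _
          _ = dist (X t₀ w).2 (X t₀ w₀).2 := (Real.dist_eq _ _).symm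
          _ ≤ dist (X t₀ w) (X t₀ w₀) := by rw [Prod.dist_eq]; exact le_max_right _ _
          _ ≤ |w - w₀| * E := hg
      have hk' : k - k₀ ≤ |k - k₀| := le_abs_self _
      have : hm * (t - t₀) ≤ |k - k₀| + |w - w₀| * E := by
        have h2 : (X t w).2 - (X t₀ w).2 = (k - k₀) + ((X t₀ w₀).2 - (X t₀ w).2) := by
          rw [htk, ht₀k]; ring
        rw [h2] at hmono; linarith
      nlinarith
    · rcases le_or_gt t 0 with h2 | h2
      · -- t₀ ≤ t ≤ 0
        have htIw₀ : t ∈ Ioo (αm w₀) (αp w₀) :=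
          ⟨lt_of_lt_of_le ht₀I.1 hle, lt_of_le_of_lt h2 (hdom w₀ hw₀).2⟩
        have hg : dist (X t w) (X t w₀) ≤ |w - w₀| * E := by
          have := gronB w hw w₀ hw₀ t h2
            (fun s hs => ⟨lt_of_lt_of_le htI.1 hs.1, lt_of_le_of_lt hs.2 (hdom w hw).2⟩)
            (fun s hs => ⟨lt_of_lt_of_le htIw₀.1 hs.1, lt_of_le_of_lt hs.2 (hdom w₀ hw₀).2⟩)
          refine this.trans ?_
          refine mul_le_mul_of_nonneg_left ?_ hB
          rw [hEdef]
          refine Real.exp_le_exp.mpr (mul_le_mul_of_nonneg_left ?_ K.coe_nonneg)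
          calc -t ≤ |t| := neg_le_abs t
            _ ≤ T := hTb
        have hmono := mono w₀ hw₀ t₀ ht₀I t htIw₀ hle
        have hcomp : (X t w₀).2 - (X t w).2 ≤ |w - w₀| * E := by
          calc (X t w₀).2 - (X t w).2 ≤ |(X t w).2 - (X t w₀).2| := by
                rw [abs_sub_comm]; exact le_abs_self _
            _ = dist (X t w).2 (X t w₀).2 := (Real.dist_eq _ _).symm
            _ ≤ dist (X t w) (X t w₀) := by rw [Prod.dist_eq]; exact le_max_right _ _
            _ ≤ |w - w₀| * E := hg
        have hk' : k - k₀ ≤ |k - k₀| := le_abs_self _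
        have : hm * (t - t₀) ≤ |k - k₀| + |w - w₀| * E := by
          have h3 : (X t w₀).2 - (X t₀ w₀).2 = ((X t w₀).2 - (X t w).2) + (k - k₀) := by
            rw [htk, ht₀k]; ring
          rw [h3] at hmono; linarith
        nlinarith
      · -- t₀ < 0 < t
        have h0w : (0:ℝ) ∈ Ioo (αm w) (αp w) := ⟨(hdom w hw).1, (hdom w hw).2⟩
        have h0w₀ : (0:ℝ) ∈ Ioo (αm w₀) (αp w₀) := ⟨(hdom w₀ hw₀).1, (hdom w₀ hw₀).2⟩
        have hmono1 := mono w hw 0 h0w t htI h2.le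
        have hmono2 := mono w₀ hw₀ t₀ ht₀I 0 h0w₀ h1.le
        have hX0 : (X 0 w).2 = h := by rw [hinit w hw]
        have hX0' : (X 0 w₀).2 = h := by rw [hinit w₀ hw₀]
        rw [htk, hX0, sub_zero] at hmono1
        rw [ht₀k, hX0', zero_sub] at hmono2
        have hk' : k - k₀ ≤ |k - k₀| := le_abs_self _
        nlinarith
  intro k w k₀ w₀ hkw hk₀
  rcases le_total (S k₀ w₀) (S k w) with hle | hle
  · rw [abs_of_nonneg (by linarith)]
    exact key k w k₀ w₀ hkw hk₀ hle
  · rw [abs_of_nonpos (by linarith)]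
    have := key k₀ w₀ k w hk₀ hkw hle
    rw [abs_sub_comm k₀ k, abs_sub_comm w₀ w] at this
    linarith
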